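/- If q ∈ K[x_1, ..., x_d] vanishes on every common zero in K^d of a triangular system p_1, ..., p_d whose total number of distinct common zeros is n_1 ⋯ n_d (the maximal case), and q has degree less than n_k in x_k for every k, then q = 0. -/

import Mathlib

open MvPolynomial

/-- A triangular system: `p k` is monic of degree `n k` in the variable `x k`,
with all other terms involving only variables `x j`, `j ≤ k`, and of degree
less than `n k` in `x k`. -/
def IsTriangular {K : Type*} [CommRing K] {d : ℕ} (n : Fin d → ℕ)
    (p : Fin d → MvPolynomial (Fin d) K) : Prop :=
  ∀ k : Fin d, ∃ q : MvPolynomial (Fin d) K,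
    (∀ j ∈ q.vars, j ≤ k) ∧ q.degreeOf k < n k ∧ p k = X k ^ n k + q

/-- The set of common zeros of the system in `K^d`. -/
def zeroSet {K : Type*} [CommRing K] {d : ℕ}
    (p : Fin d → MvPolynomial (Fin d) K) : Set (Fin d → K) :=
  {a : Fin d → K | ∀ k, eval a (p k) = 0}

section Aux

variable {K : Type*} [CommSemiring K] {d : ℕ}

lemma mem_vars_iff_degreeOf_ne_zero {σ : Type*} (j : σ) (f : MvPolynomial σ K) :
    j ∈ f.vars ↔ degreeOf j f ≠ 0 := by
  rw [mem_vars]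
  constructor
  · rintro ⟨m, hm, hj⟩
    have h1 : 1 ≤ m j := Nat.one_le_iff_ne_zero.mpr (Finsupp.mem_support_iff.mp hj)
    have h2 := monomial_le_degreeOf j hm
    omega
  · intro h
    rw [degreeOf_eq_sup] at h
    obtain ⟨m, hm, hmj⟩ : ∃ m ∈ f.support, m j ≠ 0 := by
      by_contra hc
      push_neg at hc
      exact h (Nat.le_zero.mp (Finset.sup_le fun m hm => Nat.le_zero.mpr (hc m hm)))
    exact ⟨m, hm, Finsupp.mem_support_iff.mpr hmj⟩

lemma exists_C_of_degreeOf_eq_zero {σ : Type*} {f : MvPolynomial σ K}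
    (h : ∀ j, degreeOf j f = 0) : ∃ c : K, f = C c := by
  classical
  refine ⟨f.coeff 0, ?_⟩
  ext m
  rw [coeff_C]
  split_ifs with hm
  · rw [← hm]
  · by_contra hne
    have hmem : m ∈ f.support := by
      rw [MvPolynomial.mem_support_iff]
      intro h0
      exact hne (by rw [h0])
    obtain ⟨j, hj⟩ : ∃ j, m j ≠ 0 := by
      by_contra hc
      push_neg at hc
      exact hm (Eq.symm (Finsupp.ext hc))
    have := monomial_le_degreeOf j hmem
    rw [h j] at this
    omega

/-- Specialization of the first variable to `a`. -/
noncomputable def spec (a : K) (f : MvPolynomial (Fin (d + 1)) K) :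
    MvPolynomial (Fin d) K :=
  Polynomial.eval (C a) (finSuccEquiv K d f)

lemma eval_spec (a : K) (s : Fin d → K) (f : MvPolynomial (Fin (d + 1)) K) :
    eval s (spec a f) = eval (Fin.cons a s) f := by
  rw [eval_eq_eval_mv_eval', spec, Polynomial.eval_map, Polynomial.eval,
    Polynomial.hom_eval₂, RingHom.comp_id, eval_C]

lemma degreeOf_spec_le (a : K) (f : MvPolynomial (Fin (d + 1)) K) (j : Fin d) :
    degreeOf j (spec a f) ≤ degreeOf j.succ f := by
  rw [spec, Polynomial.eval_eq_sum_range]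
  refine le_trans (degreeOf_sum_le _ _ _) (Finset.sup_le fun i _ => ?_)
  refine le_trans (degreeOf_mul_le _ _ _) ?_
  have h1 := degreeOf_coeff_finSuccEquiv f j i
  have h2 : degreeOf j ((C a : MvPolynomial (Fin d) K) ^ i) = 0 := by
    rw [← C_pow]; exact degreeOf_C _ _
  omega

lemma spec_add (a : K) (f g : MvPolynomial (Fin (d + 1)) K) :
    spec a (f + g) = spec a f + spec a g := by
  simp [spec]

lemma spec_X_succ_pow (a : K) (k : Fin d) (m : ℕ) :
    spec a ((X k.succ : MvPolynomial (Fin (d + 1)) K) ^ m) = X k ^ m := by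
  simp [spec, finSuccEquiv_X_succ]

end Aux

theorem key {K : Type*} [Field K] :
    ∀ (d : ℕ) (n : Fin d → ℕ) (p : Fin d → MvPolynomial (Fin d) K),
      IsTriangular n p →
      (zeroSet p).Finite ∧ (zeroSet p).ncard ≤ ∏ k, n k ∧
        ((zeroSet p).ncard = ∏ k, n k →
          ∀ q : MvPolynomial (Fin d) K, (∀ a ∈ zeroSet p, eval a q = 0) →
            (∀ k, q.degreeOf k < n k) → q = 0) := by
  intro d
  induction d with
  | zero =>
    intro n p _
    haveI : Unique (Fin 0 → K) := ⟨⟨finZeroElim⟩, fun f => funext fun x => x.elim0⟩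
    have hfin : (zeroSet p).Finite := Set.toFinite _
    refine ⟨hfin, ?_, ?_⟩
    · have h1 := Set.ncard_le_ncard (Set.subset_univ (zeroSet p)) Set.finite_univ
      simpa [Set.ncard_univ, Nat.card_unique] using h1
    · intro hmax q hvan _
      have hne : (zeroSet p).Nonempty := by
        apply Set.nonempty_of_ncard_ne_zero
        simp [hmax]
      obtain ⟨a, ha⟩ := hne
      have h0 := hvan a ha
      rw [eq_C_of_isEmpty q] at h0 ⊢
      rw [eval_C] at h0
      rw [h0, map_zero]
  | succ d IH =>
    intro n p htri
    classical
    have npos : ∀ k, 0 < n k := fun k => by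
      obtain ⟨qk, -, h2, -⟩ := htri k
      exact lt_of_le_of_lt (Nat.zero_le _) h2
    -- specialized systems
    set p' : K → Fin d → MvPolynomial (Fin d) K := fun a k => spec a (p k.succ) with hp'
    have htri' : ∀ a : K, IsTriangular (fun k => n k.succ) (p' a) := by
      intro a k
      obtain ⟨qk, hv, hd, he⟩ := htri k.succ
      refine ⟨spec a qk, ?_, lt_of_le_of_lt (degreeOf_spec_le a qk k) hd, ?_⟩
      · intro j hj
        have hj1 : degreeOf j (spec a qk) ≠ 0 := (mem_vars_iff_degreeOf_ne_zero j _).mp hj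
        have hj2 : degreeOf j.succ qk ≠ 0 := by
          have := degreeOf_spec_le a qk j
          omega
        have := hv j.succ ((mem_vars_iff_degreeOf_ne_zero _ _).mpr hj2)
        exact Fin.succ_le_succ_iff.mp this
      · show spec a (p k.succ) = _
        rw [he, spec_add, spec_X_succ_pow]
    have hFa : ∀ a : K, (zeroSet (p' a)).Finite := fun a => (IH _ _ (htri' a)).1
    have hcard : ∀ a : K, (zeroSet (p' a)).ncard ≤ ∏ k : Fin d, n k.succ :=
      fun a => (IH _ _ (htri' a)).2.1
    -- the univariate polynomial in the first variable
    obtain ⟨q0, hq0v, hq0d, hp0⟩ := htri 0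
    set u : Polynomial (MvPolynomial (Fin d) K) := finSuccEquiv K d (p 0) with hu_def
    have hudecomp : u = Polynomial.X ^ n 0 + finSuccEquiv K d q0 := by
      rw [hu_def, hp0, map_add, map_pow, finSuccEquiv_X_zero]
    have hq0lt : (finSuccEquiv K d q0).degree < (n 0 : ℕ) := by
      refine lt_of_le_of_lt (Polynomial.degree_le_natDegree) ?_
      rw [natDegree_finSuccEquiv]
      exact_mod_cast hq0d
    have humonic : u.Monic := by
      rw [hudecomp]; exact Polynomial.monic_X_pow_add hq0lt
    have hudeg : u.degree = (n 0 : ℕ) := by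
      rw [hudecomp, Polynomial.degree_add_eq_left_of_degree_lt, Polynomial.degree_X_pow]
      rwa [Polynomial.degree_X_pow]
    have hunat : u.natDegree = n 0 := Polynomial.natDegree_eq_of_degree_eq_some hudeg
    -- the coefficients of u are constants
    have hconst : ∀ s : Fin d → K,
        Polynomial.map (eval s) u = Polynomial.map constantCoeff u := by
      intro s
      ext i
      rw [Polynomial.coeff_map, Polynomial.coeff_map]
      have hdeg0 : ∀ j : Fin d, degreeOf j (u.coeff i) = 0 := by
        intro j
        have h1 := degreeOf_coeff_finSuccEquiv (p 0) j i
        rw [← hu_def] at h1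
        have h2 : degreeOf j.succ (p 0) = 0 := by
          rw [hp0]
          have hx : degreeOf j.succ ((X 0 : MvPolynomial (Fin (d + 1)) K) ^ n 0) = 0 := by
            have := degreeOf_pow_le j.succ (X 0 : MvPolynomial (Fin (d + 1)) K) (n 0)
            have hX : degreeOf j.succ (X 0 : MvPolynomial (Fin (d + 1)) K) = 0 := by
              rw [degreeOf_X]
              simp [Fin.succ_ne_zero j]
            rw [hX, Nat.mul_zero] at this
            omega
          have hq : degreeOf j.succ q0 = 0 := by
            by_contra hq
            have := hq0v j.succ ((mem_vars_iff_degreeOf_ne_zero _ _).mpr hq)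
            exact Fin.succ_ne_zero j (Fin.le_zero_iff.mp this)
          have := degreeOf_add_le j.succ ((X 0 : MvPolynomial (Fin (d + 1)) K) ^ n 0) q0
          omega
        omega
      obtain ⟨c, hc⟩ := exists_C_of_degreeOf_eq_zero hdeg0
      rw [hc, eval_C, constantCoeff_C]
    set u₀ : Polynomial K := Polynomial.map constantCoeff u with hu₀
    have hu₀monic : u₀.Monic := humonic.map _
    have hu₀ne : u₀ ≠ 0 := hu₀monic.ne_zero
    have hu₀nat : u₀.natDegree = n 0 := by
      rw [hu₀, humonic.natDegree_map, hunat]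
    have hevalp0 : ∀ (a : K) (s : Fin d → K),
        eval (Fin.cons a s) (p 0) = u₀.eval a := by
      intro a s
      rw [eval_eq_eval_mv_eval', ← hu_def, hconst s]
    set R : Finset K := u₀.roots.toFinset with hR
    have hRmem : ∀ a : K, a ∈ R ↔ u₀.eval a = 0 := by
      intro a
      rw [hR, Multiset.mem_toFinset, Polynomial.mem_roots hu₀ne]
      exact Iff.rfl
    have hRcard : R.card ≤ n 0 :=
      le_trans (Multiset.toFinset_card_le _) (le_trans (Polynomial.card_roots' u₀) hu₀nat.le)
    -- membership characterization
    have hmem : ∀ z : Fin (d + 1) → K,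
        z ∈ zeroSet p ↔ z 0 ∈ R ∧ Fin.tail z ∈ zeroSet (p' (z 0)) := by
      intro z
      constructor
      · intro h
        refine ⟨?_, ?_⟩
        · rw [hRmem, ← hevalp0 (z 0) (Fin.tail z), Fin.cons_self_tail]
          exact h 0
        · intro k
          show eval (Fin.tail z) (spec (z 0) (p k.succ)) = 0
          rw [eval_spec, Fin.cons_self_tail]
          exact h k.succ
      · rintro ⟨h0, h1⟩ k
        cases k using Fin.cases with
        | zero =>
          rw [← Fin.cons_self_tail z, hevalp0]
          exact (hRmem _).mp h0
        | succ k =>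
          rw [← Fin.cons_self_tail z, ← eval_spec]
          exact h1 k
    -- Finset decomposition of the zero set
    set cns : K → (Fin d → K) → (Fin (d + 1) → K) := fun a s => Fin.cons a s with hcns
    have hinj : ∀ a : K, Function.Injective (cns a) :=
      fun a => Fin.cons_right_injective (α := fun _ => K) a
    set T : Finset (Fin (d + 1) → K) :=
      R.biUnion (fun a => ((hFa a).toFinset).image (cns a)) with hT
    have hZT : zeroSet p = ↑T := by
      ext z
      rw [hmem z, hT]
      simp only [Finset.coe_biUnion, Set.mem_iUnion, Finset.mem_coe, Finset.mem_image,
        Set.Finite.mem_toFinset]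
      constructor
      · rintro ⟨h0, h1⟩
        exact ⟨z 0, h0, Fin.tail z, h1, Fin.cons_self_tail z⟩
      · rintro ⟨a, ha, s, hs, rfl⟩
        refine ⟨by simpa [hcns] using ha, by simpa [hcns] using hs⟩
    have hdisj : ∀ a ∈ R, ∀ b ∈ R, a ≠ b →
        Disjoint (((hFa a).toFinset).image (cns a))
          (((hFa b).toFinset).image (cns b)) := by
      intro a _ b _ hab
      rw [Finset.disjoint_left]
      rintro z hza hzb
      rw [Finset.mem_image] at hza hzb
      obtain ⟨s, -, rfl⟩ := hza
      obtain ⟨t, -, hzt⟩ := hzb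
      have h := congrFun hzt 0
      simp only [hcns, Fin.cons_zero] at h
      exact hab h.symm
    have hTcard : T.card = ∑ a ∈ R, (zeroSet (p' a)).ncard := by
      rw [hT, Finset.card_biUnion hdisj]
      refine Finset.sum_congr rfl fun a _ => ?_
      rw [Finset.card_image_of_injective _ (hinj a),
        Set.ncard_eq_toFinset_card _ (hFa a)]
    have hfin : (zeroSet p).Finite := by rw [hZT]; exact T.finite_toSet
    have hncard : (zeroSet p).ncard = ∑ a ∈ R, (zeroSet (p' a)).ncard := by
      rw [hZT, Set.ncard_coe_finset, hTcard]
    have hprodsucc : ∏ k, n k = n 0 * ∏ k : Fin d, n k.succ := Fin.prod_univ_succ n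
    set N' : ℕ := ∏ k : Fin d, n k.succ with hN'
    have hbound : (zeroSet p).ncard ≤ ∏ k, n k := by
      rw [hncard, hprodsucc]
      calc ∑ a ∈ R, (zeroSet (p' a)).ncard ≤ ∑ _a ∈ R, N' :=
            Finset.sum_le_sum fun a _ => hcard a
        _ = R.card * N' := by rw [Finset.sum_const, smul_eq_mul]
        _ ≤ n 0 * N' := Nat.mul_le_mul_right _ hRcard
    refine ⟨hfin, hbound, ?_⟩
    intro hmax q hvan hdeg
    have hN'pos : 0 < N' := Finset.prod_pos fun k _ => npos k.succ
    have hsum : ∑ a ∈ R, (zeroSet (p' a)).ncard = n 0 * N' := by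
      rw [← hncard, hmax, hprodsucc]
    have hRfull : R.card = n 0 := by
      by_contra hne
      have hlt : R.card < n 0 := lt_of_le_of_ne hRcard hne
      have h1 : ∑ a ∈ R, (zeroSet (p' a)).ncard ≤ R.card * N' := by
        calc ∑ a ∈ R, (zeroSet (p' a)).ncard ≤ ∑ _a ∈ R, N' :=
              Finset.sum_le_sum fun a _ => hcard a
          _ = R.card * N' := by rw [Finset.sum_const, smul_eq_mul]
      have h2 : R.card * N' < n 0 * N' := mul_lt_mul_of_pos_right hlt hN'pos
      omega
    have hfib : ∀ a ∈ R, (zeroSet (p' a)).ncard = N' := by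
      intro a ha
      by_contra hne
      have hlt : (zeroSet (p' a)).ncard < N' := lt_of_le_of_ne (hcard a) hne
      have h1 : ∑ b ∈ R, (zeroSet (p' b)).ncard < ∑ _b ∈ R, N' :=
        Finset.sum_lt_sum (fun b _ => hcard b) ⟨a, ha, hlt⟩
      rw [Finset.sum_const, smul_eq_mul, hRfull] at h1
      omega
    have hspecq : ∀ a ∈ R, spec a q = 0 := by
      intro a ha
      refine (IH _ _ (htri' a)).2.2 (hfib a ha) _ ?_ ?_
      · intro s hs
        rw [eval_spec]
        refine hvan _ ((hmem _).mpr ⟨by simpa using ha, by simpa using hs⟩)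
      · exact fun k => lt_of_le_of_lt (degreeOf_spec_le a q k) (hdeg k.succ)
    set Q : Polynomial (MvPolynomial (Fin d) K) := finSuccEquiv K d q with hQ
    have hQdeg : Q.natDegree < n 0 := by
      rw [hQ, natDegree_finSuccEquiv]
      exact hdeg 0
    by_contra hq0
    have hQne : Q ≠ 0 := by
      intro h
      apply hq0
      have := congrArg (finSuccEquiv K d).symm h
      simpa [hQ] using this
    have hsub : R.image (fun a => (C a : MvPolynomial (Fin d) K)) ⊆ Q.roots.toFinset := by
      intro x hx
      rw [Finset.mem_image] at hx
      obtain ⟨a, ha, rfl⟩ := hx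
      rw [Multiset.mem_toFinset, Polynomial.mem_roots hQne]
      exact hspecq a ha
    have hle : (R.image (fun a => (C a : MvPolynomial (Fin d) K))).card ≤ Q.natDegree :=
      le_trans (Finset.card_le_card hsub)
        (le_trans (Multiset.toFinset_card_le _) (Polynomial.card_roots' Q))
    rw [Finset.card_image_of_injective _ (C_injective (Fin d) K), hRfull] at hle
    omega


theorem stmt_14 {K : Type*} [Field K] {d : ℕ}
    (n : Fin d → ℕ) (p : Fin d → MvPolynomial (Fin d) K)
    (htri : IsTriangular n p)
    (hmax : (zeroSet p).ncard = ∏ k, n k)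
    (q : MvPolynomial (Fin d) K)
    (hvan : ∀ a ∈ zeroSet p, eval a q = 0)
    (hdeg : ∀ k, q.degreeOf k < n k) :
    q = 0 := by
  exact (key d n p htri).2.2 hmax q hvan hdeg
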